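/- arXiv:2003.08862 — 3 statements merged into one kernel-verified Lean document; each statement's English description precedes it below -/
import Mathlib

section
/- Let A, B > 0. Set s := √(A² + B²), ξ_{E₁} := 2(B + s), and Q := -2iA² + A(ξ_{E₁} - 12B) + 2iB(4B - ξ_{E₁}) ∈ ℂ. Then Im(Q² · (B - iA)) = 16·(4AB³(s - B) + A³B(3s - 5B)), and this quantity is strictly positive. -/
/-- Positivity of `Im(Q(ξ_{E₁})² Ē₂)`, which implies `q₁(ξ_{E₁}) ≠ 0` and
`q₂(ξ_{E₁}) ≠ 0`. -/
theorem stmt_12 (A B : ℝ) (hA : 0 < A) (hB : 0 < B) :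
    let s : ℝ := Real.sqrt (A^2 + B^2)
    let ξ : ℝ := 2 * (B + s)
    let Q : ℂ := -2 * Complex.I * (A:ℂ)^2 + (A:ℂ) * ((ξ:ℂ) - 12 * (B:ℂ))
      + 2 * Complex.I * (B:ℂ) * (4 * (B:ℂ) - (ξ:ℂ))
    (Q^2 * ((B:ℂ) - Complex.I * (A:ℂ))).im
        = 16 * (4 * A * B^3 * (s - B) + A^3 * B * (3 * s - 5 * B)) ∧
    0 < (Q^2 * ((B:ℂ) - Complex.I * (A:ℂ))).im := by
  intro s ξ Q
  have hs2 : s ^ 2 = A ^ 2 + B ^ 2 := Real.sq_sqrt (by positivity)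
  have hspos : 0 < s := Real.sqrt_pos.mpr (by positivity)
  have hsB : B < s := by nlinarith
  have hre : Q.re = A * (ξ - 12 * B) := by
    simp [Q, ← Complex.ofReal_pow]
  have himQ : Q.im = -2 * A^2 + 2 * B * (4 * B - ξ) := by
    simp [Q, ← Complex.ofReal_pow]
  have him : (Q^2 * ((B:ℂ) - Complex.I * (A:ℂ))).im
      = 16 * (4 * A * B^3 * (s - B) + A^3 * B * (3 * s - 5 * B)) := by
    rw [pow_two, Complex.mul_im, Complex.mul_re, Complex.mul_im]
    simp only [hre, himQ, Complex.sub_re, Complex.sub_im, Complex.mul_re, Complex.mul_im,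
      Complex.I_re, Complex.I_im, Complex.ofReal_re, Complex.ofReal_im]
    have hξ : ξ = 2 * (B + s) := rfl
    rw [hξ]
    ring_nf
    linear_combination (-4 * A^3) * hs2
  have key : 4 * A * B^3 * (s - B) + A^3 * B * (3 * s - 5 * B)
      = A * B * (s - B)^2 * (3 * s + B) := by
    linear_combination (-3 * A * B * s + 5 * A * B^2) * hs2
  refine ⟨him, ?_⟩
  rw [him, key]
  have hsBp : 0 < s - B := sub_pos.mpr hsB
  positivity
end

section
/- Let A, B > 0 and s := √(A² + B²). The complex number c₁ := 2B(-B + iA)/(A² + 4iAB - 3B² - Bs) has strictly positive real part and strictly positive imaginary part. Moreover, Re(c₁)·|D|² = 2B²(3A² + 3B² + Bs) and Im(c₁)·|D|² = 2ABs(s - B), where D := A² + 4iAB - 3B² - Bs. -/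
/-- The coefficient `c₁ = 2B E₁/(A² + 4iAB - 3B² - B|E₂|)` has strictly positive
real and imaginary parts, with explicit formulas. -/
theorem stmt_14 (A B : ℝ) (hA : 0 < A) (hB : 0 < B) :
    let s : ℝ := Real.sqrt (A^2 + B^2)
    let D : ℂ := (A:ℂ)^2 + 4 * Complex.I * (A:ℂ) * (B:ℂ) - 3 * (B:ℂ)^2 - (B:ℂ) * (s:ℂ)
    let c₁ : ℂ := 2 * (B:ℂ) * (-(B:ℂ) + Complex.I * (A:ℂ)) / D
    0 < c₁.re ∧ 0 < c₁.im ∧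
    c₁.re * ‖D‖^2 = 2 * B^2 * (3 * A^2 + 3 * B^2 + B * s) ∧
    c₁.im * ‖D‖^2 = 2 * A * B * s * (s - B) := by
  intro s D c₁
  have hs0 : 0 ≤ s := Real.sqrt_nonneg _
  have hs2 : s^2 = A^2 + B^2 := Real.sq_sqrt (by positivity)
  have hBs : B < s := by nlinarith
  have hDre : D.re = A^2 - 3*B^2 - B*s := by simp [D, pow_two]
  have hDim : D.im = 4*A*B := by simp [D, pow_two]
  have hnsq : Complex.normSq D = (A^2 - 3*B^2 - B*s)^2 + (4*A*B)^2 := by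
    rw [Complex.normSq_apply, hDre, hDim]; ring
  have hnsq0 : Complex.normSq D ≠ 0 := by
    rw [hnsq]; positivity
  have habs : ‖D‖^2 = Complex.normSq D := Complex.sq_norm D
  have hre : c₁.re * ‖D‖^2 =
      2 * B^2 * (3 * A^2 + 3 * B^2 + B * s) := by
    rw [habs, show c₁ = 2 * (B:ℂ) * (-(B:ℂ) + Complex.I * (A:ℂ)) / D from rfl,
      Complex.div_re, ← add_div, div_mul_cancel₀ _ hnsq0, hDre, hDim]
    simp [pow_two]
    ring
  have him : c₁.im * ‖D‖^2 = 2 * A * B * s * (s - B) := by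
    rw [habs, show c₁ = 2 * (B:ℂ) * (-(B:ℂ) + Complex.I * (A:ℂ)) / D from rfl,
      Complex.div_im, div_sub_div_same, div_mul_cancel₀ _ hnsq0, hDre, hDim]
    simp [pow_two]
    linear_combination (-2*A*B) * hs2
  have habs0 : 0 < ‖D‖^2 := by rw [habs]; exact lt_of_le_of_ne (Complex.normSq_nonneg D) (Ne.symm hnsq0)
  refine ⟨?_, ?_, hre, him⟩
  · have h : c₁.re = 2 * B ^ 2 * (3 * A ^ 2 + 3 * B ^ 2 + B * s) / ‖D‖^2 :=
      (eq_div_iff habs0.ne').mpr hre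
    rw [h]; positivity
  · have h : c₁.im = 2 * A * B * s * (s - B) / ‖D‖^2 :=
      (eq_div_iff habs0.ne').mpr him
    rw [h]; have hsB : 0 < s - B := sub_pos.mpr hBs; positivity
end

section
/- Let ξ, α₁, α₂, A, B ∈ ℝ with α₂ > 0, and suppose the quantity under the square root in μ₁,₂ := (−4α₁ − ξ ∓ √(−48α₁² − 8α₁ξ − 64A² + 32α₂² + 64B² + ξ²))/8 is nonnegative. Define the 2×2 matrix P with entries P₁₁ = 12α₁³ + 2α₁²ξ + 6α₁α₂² + 4α₁A² + α₂²ξ - 4α₁B², P₂₁ = -12α₁² - 2α₁ξ - 4A² + 6α₂² + 4B², P₁₂ = α₂(α₁ξ + 4A² - 6α₂² - 4B²), P₂₂ = α₂(12α₁ + ξ). Then det P = 16 α₂ ((α₁-μ₁)² + α₂²)((α₁-μ₂)² + α₂²); in particular det P > 0. -/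
open Matrix

/-- Determinant formula for the Jacobian-type matrix `P` of the genus-2 system:
`det P = 16 α₂ ((α₁-μ₁)² + α₂²)((α₁-μ₂)² + α₂²) > 0`. -/
theorem stmt_16 (ξ α₁ α₂ A B : ℝ) (hα₂ : 0 < α₂)
    (hrad : 0 ≤ -48*α₁^2 - 8*α₁*ξ - 64*A^2 + 32*α₂^2 + 64*B^2 + ξ^2) :
    let R := Real.sqrt (-48*α₁^2 - 8*α₁*ξ - 64*A^2 + 32*α₂^2 + 64*B^2 + ξ^2)
    let μ₁ := (-4*α₁ - ξ - R) / 8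
    let μ₂ := (-4*α₁ - ξ + R) / 8
    let P : Matrix (Fin 2) (Fin 2) ℝ :=
      !![12*α₁^3 + 2*α₁^2*ξ + 6*α₁*α₂^2 + 4*α₁*A^2 + α₂^2*ξ - 4*α₁*B^2,
         α₂*(α₁*ξ + 4*A^2 - 6*α₂^2 - 4*B^2);
         -12*α₁^2 - 2*α₁*ξ - 4*A^2 + 6*α₂^2 + 4*B^2,
         α₂*(12*α₁ + ξ)]
    P.det = 16 * α₂ * ((α₁ - μ₁)^2 + α₂^2) * ((α₁ - μ₂)^2 + α₂^2) ∧ 0 < P.det := by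
  intro R μ₁ μ₂ P
  have hR2 : R ^ 2 = -48*α₁^2 - 8*α₁*ξ - 64*A^2 + 32*α₂^2 + 64*B^2 + ξ^2 :=
    Real.sq_sqrt hrad
  have hdet : P.det = 16 * α₂ * ((α₁ - μ₁)^2 + α₂^2) * ((α₁ - μ₂)^2 + α₂^2) := by
    have hP : P.det =
        (12*α₁^3 + 2*α₁^2*ξ + 6*α₁*α₂^2 + 4*α₁*A^2 + α₂^2*ξ - 4*α₁*B^2) *
          (α₂*(12*α₁ + ξ)) -
        (α₂*(α₁*ξ + 4*A^2 - 6*α₂^2 - 4*B^2)) *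
          (-12*α₁^2 - 2*α₁*ξ - 4*A^2 + 6*α₂^2 + 4*B^2) := by
      simp [P, Matrix.det_fin_two_of]
    rw [hP]
    show _ = 16 * α₂ * ((α₁ - (-4*α₁ - ξ - R) / 8)^2 + α₂^2) *
      ((α₁ - (-4*α₁ - ξ + R) / 8)^2 + α₂^2)
    linear_combination (α₂*((-1/256)*R^2 + (-1/4)*B^2 + (1/4)*A^2 + (-5/8)*α₂^2
      + (21/16)*α₁^2 + (7/32)*ξ*α₁ + (1/256)*ξ^2)) * hR2
  refine ⟨hdet, ?_⟩
  rw [hdet]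
  have h1 : 0 < (α₁ - μ₁)^2 + α₂^2 := by positivity
  have h2 : 0 < (α₁ - μ₂)^2 + α₂^2 := by positivity
  positivity
end
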